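/- arXiv:0808.0851 — 2 statements merged into one kernel-verified Lean document; each statement's English description precedes it below -/
import Mathlib

section
/- Fix real constants $C_1, C_2, C_3 > 0$ with $C_3^2 > C_2$. Let $B = \{(\xi,\eta) \in \mathbb{C}^2 : C_1|\xi|^2 + |\eta|^2 < C_2 \text{ and } |\xi|^2 < 1\}$ and define $t(\xi,\eta) = \eta + i C_3 \xi$. Then for every $\alpha = A_1 + iA_2 \in \mathbb{C}$ and every point of the level set $t^{-1}(\alpha) \cap B$, writing $\xi = Re^{i\vartheta}$, the quantity $\tfrac{1}{2}(1+R^2)\big(C_3 R^2 - 2R(A_2\cos\vartheta - A_1\sin\vartheta) - C_3\big)$ is strictly negative. -/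
theorem stmt10 (C₁ C₂ C₃ : ℝ) (hC₁ : 0 < C₁) (hC₂ : 0 < C₂) (hC₃ : 0 < C₃)
    (hC : C₂ < C₃ ^ 2) (ξ η α : ℂ)
    (ht : η + Complex.I * C₃ * ξ = α)
    (hB1 : C₁ * Complex.normSq ξ + Complex.normSq η < C₂)
    (hB2 : Complex.normSq ξ < 1) :
    (1 / 2) * (1 + Complex.normSq ξ) *
      (C₃ * Complex.normSq ξ - 2 * (α.im * ξ.re - α.re * ξ.im) - C₃) < 0 := by
  have hre : η.re - C₃ * ξ.im = α.re := by
    have := congrArg Complex.re ht; simpa [sub_eq_add_neg] using this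
  have him : η.im + C₃ * ξ.re = α.im := by
    have := congrArg Complex.im ht; simpa using this
  have hs : Complex.normSq ξ = ξ.re ^ 2 + ξ.im ^ 2 := by
    simp [Complex.normSq_apply]; ring
  have hs2 : Complex.normSq η = η.re ^ 2 + η.im ^ 2 := by
    simp [Complex.normSq_apply]; ring
  have key : C₃ * Complex.normSq ξ - 2 * (α.im * ξ.re - α.re * ξ.im) - C₃ < 0 := by
    rw [hs] at hB1 hB2 ⊢
    rw [hs2] at hB1
    rw [← hre, ← him]
    nlinarith [sq_nonneg (η.im + C₃ * ξ.re), sq_nonneg (η.re - C₃ * ξ.im),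
      mul_nonneg hC₁.le (add_nonneg (sq_nonneg ξ.re) (sq_nonneg ξ.im)),
      mul_pos hC₃ hC₃, sq_nonneg ξ.re, sq_nonneg ξ.im]
  have hpos : 0 < (1 / 2 : ℝ) * (1 + Complex.normSq ξ) := by
    have := Complex.normSq_nonneg ξ
    linarith
  nlinarith [mul_pos hpos (neg_pos.mpr key)]
end

section
/- Let $n \ge 1$ and let $A$ be a symmetric real $n\times n$ matrix with trace $H$ and eigenvalue $\lambda_{\max}$ of maximum absolute value. Then $\|A\|^2 = \sum_{i,j} A_{ij}^2 \ge \big(1 + \tfrac{1}{n}\big)\lambda_{\max}^2 - H^2$. -/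
open Matrix Finset in
theorem stmt16 (n : ℕ) (A : Matrix (Fin n) (Fin n) ℝ) (hA : A.IsHermitian)
    (i₀ : Fin n) (hmax : ∀ i, |hA.eigenvalues i| ≤ |hA.eigenvalues i₀|) :
    (1 + 1 / (n : ℝ)) * hA.eigenvalues i₀ ^ 2 - A.trace ^ 2 ≤ ∑ i, ∑ j, A i j ^ 2 := by
  classical
  set lam := hA.eigenvalues with hlam
  set U : Matrix (Fin n) (Fin n) ℝ := (hA.eigenvectorUnitary : Matrix (Fin n) (Fin n) ℝ) with hU
  have hUU : star U * U = 1 := mem_unitaryGroup_iff'.mp hA.eigenvectorUnitary.2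
  have hUU2 : U * star U = 1 := mem_unitaryGroup_iff.mp hA.eigenvectorUnitary.2
  have hspec := hA.spectral_theorem
  rw [Unitary.conjStarAlgAut_apply] at hspec
  set D : Matrix (Fin n) (Fin n) ℝ := diagonal (RCLike.ofReal ∘ lam) with hD
  -- trace A = ∑ lam
  have htr : A.trace = ∑ i, lam i := by
    calc A.trace = (U * D * star U).trace := by rw [← hspec]
    _ = (star U * (U * D)).trace := by rw [Matrix.trace_mul_comm]
    _ = ∑ i, lam i := by rw [← mul_assoc, hUU, one_mul, hD, trace_diagonal]; simp
  -- sum of squares = trace (A*A)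
  have hAA : ∑ i, ∑ j, A i j ^ 2 = ∑ i, lam i ^ 2 := by
    have hsym : ∀ i j, A j i = A i j := fun i j => by
      have := congrFun (congrFun hA j) i
      simpa [Matrix.conjTranspose_apply] using this.symm
    have h1 : ∑ i, ∑ j, A i j ^ 2 = (A * A).trace := by
      simp only [Matrix.trace, Matrix.diag, Matrix.mul_apply]
      refine Finset.sum_congr rfl fun i _ => Finset.sum_congr rfl fun j _ => ?_
      rw [hsym i j]; ring
    have h2 : A * A = U * (D * D) * star U := by
      conv_lhs => rw [hspec]
      calc U * D * star U * (U * D * star U)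
          = U * (D * ((star U * U) * (D * star U))) := by noncomm_ring
        _ = U * (D * D) * star U := by rw [hUU, one_mul]; noncomm_ring
    have h3 : (D * D).trace = ∑ i, lam i ^ 2 := by
      rw [hD, diagonal_mul_diagonal, trace_diagonal]
      simp [sq]
    rw [h1, h2, Matrix.trace_mul_comm, ← mul_assoc, hUU, one_mul, h3]
  rw [hAA, htr]
  -- now pure scalar inequality
  have hn : (1:ℝ) ≤ n := by exact_mod_cast Fin.pos i₀
  have hnpos : (0:ℝ) < n := by linarith
  have hsplit : ∑ i, lam i = lam i₀ + ∑ i ∈ univ.erase i₀, lam i :=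
    (Finset.add_sum_erase _ _ (Finset.mem_univ i₀)).symm
  have hsplit2 : ∑ i, lam i ^ 2 = lam i₀ ^ 2 + ∑ i ∈ univ.erase i₀, lam i ^ 2 :=
    (Finset.add_sum_erase _ _ (Finset.mem_univ i₀)).symm
  have hcs : (∑ i ∈ univ.erase i₀, lam i) ^ 2 ≤
      ((n:ℝ) - 1) * ∑ i ∈ univ.erase i₀, lam i ^ 2 := by
    have h := sq_sum_le_card_mul_sum_sq (s := univ.erase i₀) (f := lam)
    have hcard : (((univ.erase i₀).card : ℕ) : ℝ) = (n:ℝ) - 1 := by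
      rw [Finset.card_erase_of_mem (Finset.mem_univ i₀)]
      simp only [Finset.card_univ, Fintype.card_fin]
      rw [Nat.cast_sub (by exact_mod_cast hn)]
      simp
    calc (∑ i ∈ univ.erase i₀, lam i) ^ 2
        ≤ (((univ.erase i₀).card : ℕ) : ℝ) * ∑ i ∈ univ.erase i₀, lam i ^ 2 := by
          exact_mod_cast h
      _ = _ := by rw [hcard]
  set S := ∑ i ∈ univ.erase i₀, lam i
  set Q := ∑ i ∈ univ.erase i₀, lam i ^ 2
  rw [hsplit, hsplit2]
  have hQ : 0 ≤ Q := Finset.sum_nonneg fun i _ => sq_nonneg _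
  have key : lam i₀ ^ 2 / n ≤ (lam i₀ + S) ^ 2 + Q := by
    by_cases h1 : (univ.erase i₀ : Finset (Fin n)) = ∅
    · have hS : S = 0 := by unfold S; rw [h1, Finset.sum_empty]
      have hQ0 : Q = 0 := by unfold Q; rw [h1, Finset.sum_empty]
      rw [hS, hQ0, div_le_iff₀ hnpos]
      nlinarith [sq_nonneg (lam i₀)]
    · have hne : (univ.erase i₀ : Finset (Fin n)).Nonempty := Finset.nonempty_iff_ne_empty.mpr h1
      have hc1 : 1 ≤ (univ.erase i₀ : Finset (Fin n)).card := Finset.card_pos.mpr hne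
      have hc2 : (univ.erase i₀ : Finset (Fin n)).card = n - 1 := by
        rw [Finset.card_erase_of_mem (Finset.mem_univ i₀)]; simp
      have hn2 : (2:ℝ) ≤ n := by
        have : 2 ≤ n := by omega
        exact_mod_cast this
      rw [div_le_iff₀ hnpos]
      nlinarith [sq_nonneg (S + ((n:ℝ) - 1) * (lam i₀ + S)),
        mul_le_mul_of_nonneg_left hcs hnpos.le, hQ, hn2]
  have hexp : (1 + 1 / (n:ℝ)) * lam i₀ ^ 2 = lam i₀ ^ 2 + lam i₀ ^ 2 / n := by ring
  linarith
end
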